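/- The complete graph K_4 is edge-3-choosable: for every assignment L of a list of at least 3 colors to each of the 6 edges of K_4, there is a proper edge coloring of K_4 in which each edge receives a color from its own list (edges sharing an endpoint receive distinct colors). -/

import Mathlib

theorem pick_ne (S : Finset ℕ) (x : ℕ) (h : 2 ≤ S.card) : ∃ y ∈ S, y ≠ x := by
  obtain ⟨a, ha, b, hb, hab⟩ := Finset.one_lt_card.mp h
  rcases eq_or_ne a x with rfl | h'
  · exact ⟨b, hb, fun hbx => hab hbx.symm⟩
  · exact ⟨a, ha, h'⟩

theorem c4aux (S1 S2 S3 S4 : Finset ℕ)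
    (h2 : 2 ≤ S2.card) (h3 : 2 ≤ S3.card) (h4 : 2 ≤ S4.card)
    (y : ℕ) (hy1 : y ∈ S1) (hy2 : y ∉ S2) :
    ∃ x1 ∈ S1, ∃ x2 ∈ S2, ∃ x3 ∈ S3, ∃ x4 ∈ S4,
      x1 ≠ x2 ∧ x2 ≠ x3 ∧ x3 ≠ x4 ∧ x4 ≠ x1 := by
  obtain ⟨x4, hx4, h41⟩ := pick_ne S4 y h4
  obtain ⟨x3, hx3, h34⟩ := pick_ne S3 x4 h3
  obtain ⟨x2, hx2, h23⟩ := pick_ne S2 x3 h2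
  exact ⟨y, hy1, x2, hx2, x3, hx3, x4, hx4,
    fun h => hy2 (h ▸ hx2), h23, h34, h41⟩

theorem c4 (S1 S2 S3 S4 : Finset ℕ)
    (h1 : 2 ≤ S1.card) (h2 : 2 ≤ S2.card) (h3 : 2 ≤ S3.card) (h4 : 2 ≤ S4.card) :
    ∃ x1 ∈ S1, ∃ x2 ∈ S2, ∃ x3 ∈ S3, ∃ x4 ∈ S4,
      x1 ≠ x2 ∧ x2 ≠ x3 ∧ x3 ≠ x4 ∧ x4 ≠ x1 := by
  by_cases h12 : S1 ⊆ S2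
  · by_cases h23 : S2 ⊆ S3
    · by_cases h34 : S3 ⊆ S4
      · by_cases h41 : S4 ⊆ S1
        · -- all equal
          obtain ⟨p, hp, q, hq, hpq⟩ := Finset.one_lt_card.mp h1
          exact ⟨p, hp, q, h12 hq, p, h23 (h12 hp), q, h34 (h23 (h12 hq)),
            hpq, fun h => hpq h.symm, hpq, fun h => hpq h.symm⟩
        · obtain ⟨y, hy4, hy1⟩ := Finset.not_subset.mp h41
          obtain ⟨x1, m1, x2, m2, x3, m3, x4, m4, a, b, c, d⟩ :=
            c4aux S4 S1 S2 S3 h1 h2 h3 y hy4 hy1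
          exact ⟨x2, m2, x3, m3, x4, m4, x1, m1, b, c, d, a⟩
      · obtain ⟨y, hy3, hy4⟩ := Finset.not_subset.mp h34
        obtain ⟨x1, m1, x2, m2, x3, m3, x4, m4, a, b, c, d⟩ :=
          c4aux S3 S4 S1 S2 h4 h1 h2 y hy3 hy4
        exact ⟨x3, m3, x4, m4, x1, m1, x2, m2, c, d, a, b⟩
    · obtain ⟨y, hy2, hy3⟩ := Finset.not_subset.mp h23
      obtain ⟨x1, m1, x2, m2, x3, m3, x4, m4, a, b, c, d⟩ :=
        c4aux S2 S3 S4 S1 h3 h4 h1 y hy2 hy3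
      exact ⟨x4, m4, x1, m1, x2, m2, x3, m3, d, a, b, c⟩
  · obtain ⟨y, hy1, hy2⟩ := Finset.not_subset.mp h12
    exact c4aux S1 S2 S3 S4 h2 h3 h4 y hy1 hy2

theorem erase2 {S : Finset ℕ} (h : 3 ≤ S.card) (x : ℕ) : 2 ≤ (S.erase x).card := by
  have := Finset.pred_card_le_card_erase (s := S) (a := x)
  omega

theorem pair_of_card : ∀ s : Finset (Fin 6), 4 ≤ s.card →
    ((0:Fin 6) ∈ s ∧ (5:Fin 6) ∈ s) ∨ ((1:Fin 6) ∈ s ∧ (4:Fin 6) ∈ s)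
      ∨ ((2:Fin 6) ∈ s ∧ (3:Fin 6) ∈ s) := by decide

theorem hall6 (A B C D E F : Finset ℕ)
    (hA : 3 ≤ A.card) (hB : 3 ≤ B.card) (hC : 3 ≤ C.card)
    (hD : 3 ≤ D.card) (hE : 3 ≤ E.card) (hF : 3 ≤ F.card)
    (hAF : Disjoint A F) (hBE : Disjoint B E) (hCD : Disjoint C D) :
    ∃ g : Fin 6 → ℕ, Function.Injective g ∧ ∀ i, g i ∈ (![A,B,C,D,E,F]) i := by
  set t : Fin 6 → Finset ℕ := ![A,B,C,D,E,F] with ht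
  have hcard : ∀ i, 3 ≤ (t i).card := by
    intro i; fin_cases i <;> assumption
  apply (Finset.all_card_le_biUnion_card_iff_existsInjective' t).mp
  intro s
  rcases s.eq_empty_or_nonempty with rfl | ⟨i, hi⟩
  · simp
  by_cases hs : s.card ≤ 3
  · calc s.card ≤ 3 := hs
      _ ≤ (t i).card := hcard i
      _ ≤ (s.biUnion t).card :=
        Finset.card_le_card (fun x hx => Finset.mem_biUnion.mpr ⟨i, hi, hx⟩)
  · have h4 : 4 ≤ s.card := by omega
    have hpair := pair_of_card s h4
    have hs6 : s.card ≤ 6 := by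
      have := Finset.card_le_univ s; simpa using this
    obtain ⟨hm1, hm2⟩ | ⟨hm1, hm2⟩ | ⟨hm1, hm2⟩ := hpair
    case _ => exact le_trans hs6 (by
      have hd : Disjoint (t 0) (t 5) := hAF
      have : t 0 ∪ t 5 ⊆ s.biUnion t := by
        intro x hx; rcases Finset.mem_union.mp hx with h|h
        exacts [Finset.mem_biUnion.mpr ⟨0, hm1, h⟩, Finset.mem_biUnion.mpr ⟨5, hm2, h⟩]
      calc (6:ℕ) ≤ (t 0).card + (t 5).card := by have := hcard 0; have := hcard 5; omega
        _ = (t 0 ∪ t 5).card := (Finset.card_union_of_disjoint hd).symm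
        _ ≤ _ := Finset.card_le_card this)
    case _ => exact le_trans hs6 (by
      have hd : Disjoint (t 1) (t 4) := hBE
      have : t 1 ∪ t 4 ⊆ s.biUnion t := by
        intro x hx; rcases Finset.mem_union.mp hx with h|h
        exacts [Finset.mem_biUnion.mpr ⟨1, hm1, h⟩, Finset.mem_biUnion.mpr ⟨4, hm2, h⟩]
      calc (6:ℕ) ≤ (t 1).card + (t 4).card := by have := hcard 1; have := hcard 4; omega
        _ = (t 1 ∪ t 4).card := (Finset.card_union_of_disjoint hd).symm
        _ ≤ _ := Finset.card_le_card this)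
    case _ => exact le_trans hs6 (by
      have hd : Disjoint (t 2) (t 3) := hCD
      have : t 2 ∪ t 3 ⊆ s.biUnion t := by
        intro x hx; rcases Finset.mem_union.mp hx with h|h
        exacts [Finset.mem_biUnion.mpr ⟨2, hm1, h⟩, Finset.mem_biUnion.mpr ⟨3, hm2, h⟩]
      calc (6:ℕ) ≤ (t 2).card + (t 3).card := by have := hcard 2; have := hcard 3; omega
        _ = (t 2 ∪ t 3).card := (Finset.card_union_of_disjoint hd).symm
        _ ≤ _ := Finset.card_le_card this)

theorem key (A B C D E F : Finset ℕ)
    (hA : 3 ≤ A.card) (hB : 3 ≤ B.card) (hC : 3 ≤ C.card)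
    (hD : 3 ≤ D.card) (hE : 3 ≤ E.card) (hF : 3 ≤ F.card) :
    ∃ a ∈ A, ∃ b ∈ B, ∃ c ∈ C, ∃ d ∈ D, ∃ e ∈ E, ∃ f ∈ F,
      a ≠ b ∧ a ≠ c ∧ a ≠ d ∧ a ≠ e ∧ b ≠ c ∧ b ≠ d ∧ b ≠ f ∧
      c ≠ e ∧ c ≠ f ∧ d ≠ e ∧ d ≠ f ∧ e ≠ f := by
  by_cases hAF : Disjoint A F
  · by_cases hBE : Disjoint B E
    · by_cases hCD : Disjoint C D
      · obtain ⟨g, hg, hmem⟩ := hall6 A B C D E F hA hB hC hD hE hF hAF hBE hCD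
        exact ⟨g 0, hmem 0, g 1, hmem 1, g 2, hmem 2, g 3, hmem 3, g 4, hmem 4, g 5, hmem 5,
          hg.ne (by decide), hg.ne (by decide), hg.ne (by decide), hg.ne (by decide),
          hg.ne (by decide), hg.ne (by decide), hg.ne (by decide), hg.ne (by decide),
          hg.ne (by decide), hg.ne (by decide), hg.ne (by decide), hg.ne (by decide)⟩
      · obtain ⟨x, hx⟩ := Finset.not_disjoint_iff.mp hCD
        obtain ⟨a, ha, b, hb, f, hf, d, hd, hab, hbf, hfe, hea⟩ :=
          c4 (A.erase x) (B.erase x) (F.erase x) (E.erase x)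
            (erase2 hA x) (erase2 hB x) (erase2 hF x) (erase2 hE x)
        obtain ⟨ha1, ha2⟩ := Finset.mem_erase.mp ha
        obtain ⟨hb1, hb2⟩ := Finset.mem_erase.mp hb
        obtain ⟨hf1, hf2⟩ := Finset.mem_erase.mp hf
        obtain ⟨hd1, hd2⟩ := Finset.mem_erase.mp hd
        exact ⟨a, ha2, b, hb2, x, hx.1, x, hx.2, d, hd2, f, hf2, by omega⟩
    · obtain ⟨x, hx⟩ := Finset.not_disjoint_iff.mp hBE
      obtain ⟨a, ha, c, hc, f, hf, d, hd, hac, hcf, hfd, hda⟩ :=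
        c4 (A.erase x) (C.erase x) (F.erase x) (D.erase x)
          (erase2 hA x) (erase2 hC x) (erase2 hF x) (erase2 hD x)
      obtain ⟨ha1, ha2⟩ := Finset.mem_erase.mp ha
      obtain ⟨hc1, hc2⟩ := Finset.mem_erase.mp hc
      obtain ⟨hf1, hf2⟩ := Finset.mem_erase.mp hf
      obtain ⟨hd1, hd2⟩ := Finset.mem_erase.mp hd
      exact ⟨a, ha2, x, hx.1, c, hc2, d, hd2, x, hx.2, f, hf2, by omega⟩
  · obtain ⟨x, hx⟩ := Finset.not_disjoint_iff.mp hAF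
    obtain ⟨b, hb, c, hc, e, he, d, hd, hbc, hce, hed, hdb⟩ :=
      c4 (B.erase x) (C.erase x) (E.erase x) (D.erase x)
        (erase2 hB x) (erase2 hC x) (erase2 hE x) (erase2 hD x)
    obtain ⟨hb1, hb2⟩ := Finset.mem_erase.mp hb
    obtain ⟨hc1, hc2⟩ := Finset.mem_erase.mp hc
    obtain ⟨he1, he2⟩ := Finset.mem_erase.mp he
    obtain ⟨hd1, hd2⟩ := Finset.mem_erase.mp hd
    exact ⟨x, hx.1, b, hb2, c, hc2, d, hd2, e, he2, x, hx.2, by omega⟩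

def M (a b c d e f : ℕ) : Fin 4 → Fin 4 → ℕ :=
  ![![0,a,b,c],![a,0,d,e],![b,d,0,f],![c,e,f,0]]

/-- The complete graph `K_4` is edge-3-choosable: from any lists
of at least 3 colors on its edges one can properly color the edges from their
lists. -/
theorem K4_edge_three_choosable
    (L : Sym2 (Fin 4) → Finset ℕ)
    (hL : ∀ e ∈ (SimpleGraph.completeGraph (Fin 4)).edgeSet, 3 ≤ (L e).card) :
    ∃ ce : Sym2 (Fin 4) → ℕ,
      (∀ e ∈ (SimpleGraph.completeGraph (Fin 4)).edgeSet, ce e ∈ L e) ∧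
      (∀ e ∈ (SimpleGraph.completeGraph (Fin 4)).edgeSet, ∀ f ∈ (SimpleGraph.completeGraph (Fin 4)).edgeSet,
        e ≠ f → (∃ x : Fin 4, x ∈ e ∧ x ∈ f) → ce e ≠ ce f) := by
  have hmem : ∀ i j : Fin 4, i ≠ j → s(i,j) ∈ (SimpleGraph.completeGraph (Fin 4)).edgeSet := by
    intro i j h; simp [SimpleGraph.completeGraph, h]
  have hclass : ∀ e : Sym2 (Fin 4), ¬ e.IsDiag →
      e = s(0,1) ∨ e = s(0,2) ∨ e = s(0,3) ∨ e = s(1,2) ∨ e = s(1,3) ∨ e = s(2,3) := by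
    decide
  obtain ⟨a, ha, b, hb, c, hc, d, hd, e, he, f, hf,
      hab, hac, had, hae, hbc, hbd, hbf, hce, hcf, hde, hdf, hef⟩ :=
    key (L s(0,1)) (L s(0,2)) (L s(0,3)) (L s(1,2)) (L s(1,3)) (L s(2,3))
      (hL _ (hmem 0 1 (by decide))) (hL _ (hmem 0 2 (by decide)))
      (hL _ (hmem 0 3 (by decide))) (hL _ (hmem 1 2 (by decide)))
      (hL _ (hmem 1 3 (by decide))) (hL _ (hmem 2 3 (by decide)))
  refine ⟨Sym2.lift ⟨M a b c d e f, by
      intro i j; fin_cases i <;> fin_cases j <;> rfl⟩, ?_, ?_⟩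
  · intro e₁ he₁
    rcases hclass e₁ ((SimpleGraph.completeGraph (Fin 4)).not_isDiag_of_mem_edgeSet he₁) with
      rfl|rfl|rfl|rfl|rfl|rfl <;> assumption
  · intro e₁ he₁ e₂ he₂ hne hx
    rcases hclass e₁ ((SimpleGraph.completeGraph (Fin 4)).not_isDiag_of_mem_edgeSet he₁) with
      rfl|rfl|rfl|rfl|rfl|rfl <;>
    rcases hclass e₂ ((SimpleGraph.completeGraph (Fin 4)).not_isDiag_of_mem_edgeSet he₂) with
      rfl|rfl|rfl|rfl|rfl|rfl <;>
    first
      | exact absurd rfl hne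
      | exact absurd hx (by decide)
      | exact hab | exact hac | exact had | exact hae | exact hbc | exact hbd
      | exact hbf | exact hce | exact hcf | exact hde | exact hdf | exact hef
      | exact hab.symm | exact hac.symm | exact had.symm | exact hae.symm
      | exact hbc.symm | exact hbd.symm | exact hbf.symm | exact hce.symm
      | exact hcf.symm | exact hde.symm | exact hdf.symm | exact hef.symm
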